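/- Assume the centered scatter matrix S(A) = A Q_m Aᵀ is positive definite. Then the Euclidean diameter of the polyhedral localization set satisfies diam(𝒳_d) ≤ ‖w‖₂ / (2 √(λ_min(S(A)))), where λ_min(S(A)) denotes the smallest eigenvalue of S(A). -/

import Mathlib

open Matrix
open scoped InnerProductSpace

noncomputable section

/-- Reinterpret a plain vector as a point of Euclidean space (with the ℓ² norm). -/
def toE {n : ℕ} (v : Fin n → ℝ) : EuclideanSpace ℝ (Fin n) := WithLp.toLp 2 v

/-- The all-ones m×m matrix 𝟙𝟙ᵀ. -/
def onesM (m : ℕ) : Matrix (Fin m) (Fin m) ℝ := Matrix.of fun _ _ => 1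

/-- The centering projector Q_m = I_m − (1/m)𝟙𝟙ᵀ. -/
def Qm (m : ℕ) : Matrix (Fin m) (Fin m) ℝ := 1 - (m : ℝ)⁻¹ • onesM m

/-- The i-th anchor a⁽ⁱ⁾, i.e. the i-th column of A, as a Euclidean point. -/
def colE {n m : ℕ} (A : Matrix (Fin n) (Fin m) ℝ) (i : Fin m) : EuclideanSpace ℝ (Fin n) :=
  toE fun k => A k i

/-- The vector ω ∈ ℝᵐ with entries ωᵢ = ‖a⁽ⁱ⁾‖₂². -/
def omegaV {n m : ℕ} (A : Matrix (Fin n) (Fin m) ℝ) : Fin m → ℝ := fun i => ‖colE A i‖ ^ 2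

/-- The polyhedral localization set
𝒳_d = {x : ∃ α, ξ⁻ ≤ Q_m ω − 2 Q_m Aᵀ x + α𝟙 ≤ ξ⁺}. -/
def Xd {n m : ℕ} (A : Matrix (Fin n) (Fin m) ℝ) (xim xip : Fin m → ℝ) :
    Set (EuclideanSpace ℝ (Fin n)) :=
  {x | ∃ α : ℝ,
      xim ≤ (Qm m).mulVec (omegaV A) - (2 : ℝ) • ((Qm m * Aᵀ).mulVec x) + α • (1 : Fin m → ℝ) ∧
      (Qm m).mulVec (omegaV A) - (2 : ℝ) • ((Qm m * Aᵀ).mulVec x) + α • (1 : Fin m → ℝ) ≤ xip}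

/-- The intersection ℋ of the upper-range balls: ℋ = ∩ᵢ {x : ‖x − a⁽ⁱ⁾‖₂ ≤ √ξᵢ⁺}. -/
def Hset {n m : ℕ} (A : Matrix (Fin n) (Fin m) ℝ) (xip : Fin m → ℝ) :
    Set (EuclideanSpace ℝ (Fin n)) :=
  {x | ∀ i, ‖x - colE A i‖ ≤ Real.sqrt (xip i)}

/-- Support function h_Ω(v) = sup_{x∈Ω} vᵀx. -/
def suppF {n : ℕ} (Ω : Set (EuclideanSpace ℝ (Fin n))) (v : EuclideanSpace ℝ (Fin n)) : ℝ :=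
  sSup ((fun x => ⟪v, x⟫_ℝ) '' Ω)

/-- ψ_Ω(v) = h_Ω(v) + h_Ω(−v). -/
def psiH {n : ℕ} (Ω : Set (EuclideanSpace ℝ (Fin n))) (v : EuclideanSpace ℝ (Fin n)) : ℝ :=
  suppF Ω v + suppF Ω (-v)

/-- Directional width width_v(Ω) = sup_{x∈Ω} vᵀx − inf_{x∈Ω} vᵀx. -/
def dwidth {n : ℕ} (v : EuclideanSpace ℝ (Fin n)) (Ω : Set (EuclideanSpace ℝ (Fin n))) : ℝ :=
  sSup ((fun x => ⟪v, x⟫_ℝ) '' Ω) - sInf ((fun x => ⟪v, x⟫_ℝ) '' Ω)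

/-- The aggregated squared radius ρ(p)² = pᵀ(ξ⁺ − ω) + ‖Ap‖₂². -/
def rho2 {n m : ℕ} (A : Matrix (Fin n) (Fin m) ℝ) (xip : Fin m → ℝ) (p : Fin m → ℝ) : ℝ :=
  p ⬝ᵥ (xip - omegaV A) + ‖toE (A.mulVec p)‖ ^ 2


lemma onesM_mul_onesM (m : ℕ) : onesM m * onesM m = (m : ℝ) • onesM m := by
  ext i j; simp [onesM, Matrix.mul_apply, Finset.sum_const]

lemma Qm_transpose (m : ℕ) : (Qm m)ᵀ = Qm m := by
  ext i j
  simp [Qm, onesM, Matrix.transpose_apply, Matrix.one_apply, eq_comm]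

lemma Qm_mul_self (m : ℕ) : Qm m * Qm m = Qm m := by
  have hc : (m : ℝ)⁻¹ * (m : ℝ)⁻¹ * (m : ℝ) = (m : ℝ)⁻¹ := by
    rcases Nat.eq_zero_or_pos m with h | h
    · subst h; simp
    · have : (m : ℝ) ≠ 0 := by positivity
      field_simp
  simp only [Qm, sub_mul, mul_sub, one_mul, mul_one, smul_mul_assoc, mul_smul_comm,
    onesM_mul_onesM]
  rw [smul_sub, smul_smul, smul_smul, hc]
  abel

lemma Qm_mulVec_smul_one (m : ℕ) (c : ℝ) : Qm m *ᵥ (c • (1 : Fin m → ℝ)) = 0 := by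
  funext i
  have hm : (m : ℝ) ≠ 0 := by
    have := i.pos
    positivity
  simp [Qm, onesM, Matrix.mulVec, dotProduct, Matrix.one_apply, sub_mul,
    Finset.sum_sub_distrib, Finset.sum_ite_eq, Finset.sum_const, hm, Pi.one_apply]

lemma dot_mulVec_symm {m : ℕ} {Q : Matrix (Fin m) (Fin m) ℝ} (hQ : Qᵀ = Q) (a b : Fin m → ℝ) :
    a ⬝ᵥ (Q *ᵥ b) = (Q *ᵥ a) ⬝ᵥ b := by
  rw [dotProduct_mulVec, ← hQ, vecMul_transpose, hQ]

lemma rayleigh_lower {n : ℕ} (hn : 0 < n) {S : Matrix (Fin n) (Fin n) ℝ} (hS : S.IsHermitian)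
    (d : Fin n → ℝ) : (⨅ j, hS.eigenvalues j) * (d ⬝ᵥ d) ≤ d ⬝ᵥ S *ᵥ d := by
  haveI : Nonempty (Fin n) := Fin.pos_iff_nonempty.mp hn
  set U : Matrix (Fin n) (Fin n) ℝ := (hS.eigenvectorUnitary : Matrix (Fin n) (Fin n) ℝ) with hUdef
  have hU : U * star U = 1 := (Matrix.mem_unitaryGroup_iff).mp hS.eigenvectorUnitary.2
  have hUt : star U = Uᵀ := by
    rw [Matrix.star_eq_conjTranspose, Matrix.conjTranspose_eq_transpose_of_trivial]
  rw [hUt] at hU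
  set y := Uᵀ *ᵥ d with hy
  have hyy : y ⬝ᵥ y = d ⬝ᵥ d := by
    rw [hy, dotProduct_mulVec, vecMul_transpose, mulVec_mulVec, hU, one_mulVec]
  have hSd : d ⬝ᵥ S *ᵥ d = ∑ i, hS.eigenvalues i * (y i * y i) := by
    conv_lhs => rw [hS.spectral_theorem, Unitary.conjStarAlgAut_apply, ← hUdef, hUt]
    rw [← mulVec_mulVec, ← mulVec_mulVec, dotProduct_mulVec]
    rw [show d ᵥ* U = Uᵀ *ᵥ d from by rw [← vecMul_transpose, transpose_transpose], ← hy]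
    simp [Matrix.mulVec_diagonal, dotProduct]
    exact Finset.sum_congr rfl fun i _ => by ring
  rw [hSd, ← hyy, dotProduct, Finset.mul_sum]
  refine Finset.sum_le_sum fun i _ => ?_
  exact mul_le_mul_of_nonneg_right (ciInf_le (Finite.bddBelow_range _) i) (mul_self_nonneg _)

/-- If S(A) = A Q_m Aᵀ ≻ 0, then
diam(𝒳_d) ≤ ‖w‖₂ / (2 √(λ_min(S(A)))), where w = ξ⁺ − ξ⁻ and λ_min is the smallest
eigenvalue of S(A). -/
theorem stmt4 {n m : ℕ} (A : Matrix (Fin n) (Fin m) ℝ) (xim xip : Fin m → ℝ) (hle : xim ≤ xip)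
    (hpd : (A * Qm m * Aᵀ).PosDef) :
    EMetric.diam (Xd A xim xip) ≤
      ENNReal.ofReal (‖toE (xip - xim)‖ / (2 * Real.sqrt (⨅ j, hpd.1.eigenvalues j))) := by
  rcases Nat.eq_zero_or_pos n with hn | hn
  · subst hn
    haveI : Subsingleton (EuclideanSpace ℝ (Fin 0)) := ⟨fun a b => (WithLp.equiv 2 _).injective (funext fun i : Fin 0 => i.elim0)⟩
    refine (EMetric.diam_subsingleton (fun a _ b _ => Subsingleton.elim a b)).trans_le ?_
    exact zero_le
  set lam := ⨅ j, hpd.1.eigenvalues j with hlamdef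
  have hlampos : 0 < lam := by
    haveI : Nonempty (Fin n) := Fin.pos_iff_nonempty.mp hn
    obtain ⟨j₀, hj₀⟩ := Finite.exists_min hpd.1.eigenvalues
    exact lt_of_lt_of_le (hpd.eigenvalues_pos j₀) (le_ciInf hj₀)
  have hsqrt : 0 < Real.sqrt lam := Real.sqrt_pos.mpr hlampos
  apply EMetric.diam_le
  intro x hx y hy
  rw [edist_dist]
  apply ENNReal.ofReal_le_ofReal
  rw [dist_eq_norm]
  obtain ⟨α, hx1, hx2⟩ := hx
  obtain ⟨β, hy1, hy2⟩ := hy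
  have hQt := Qm_transpose m
  have hQQ := Qm_mul_self m
  set w : Fin m → ℝ := xip - xim with hw
  set u : Fin m → ℝ :=
    (Qm m).mulVec (omegaV A) - (2 : ℝ) • ((Qm m * Aᵀ).mulVec x) + α • (1 : Fin m → ℝ) with hu
  set v : Fin m → ℝ :=
    (Qm m).mulVec (omegaV A) - (2 : ℝ) • ((Qm m * Aᵀ).mulVec y) + β • (1 : Fin m → ℝ) with hv
  have hzw : (u - v) ⬝ᵥ (u - v) ≤ w ⬝ᵥ w := by
    refine Finset.sum_le_sum fun i _ => ?_
    have h1 := hx1 i; have h2 := hx2 i; have h3 := hy1 i; have h4 := hy2 i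
    simp only [hw, Pi.sub_apply]
    nlinarith [h1, h2, h3, h4]
  set d : Fin n → ℝ := fun k => x k - y k with hd
  -- z's structure
  have hzeq : u - v = (-2 : ℝ) • ((Qm m * Aᵀ) *ᵥ d) + (α - β) • (1 : Fin m → ℝ) := by
    funext i
    have hsub : (Qm m * Aᵀ) *ᵥ d = (Qm m * Aᵀ) *ᵥ x - (Qm m * Aᵀ) *ᵥ y := by
      rw [← Matrix.mulVec_sub]
      congr 1
    simp only [hu, hv, hsub, Pi.add_apply, Pi.sub_apply, Pi.smul_apply, Pi.one_apply,
      smul_eq_mul]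
    ring
  have hQz : Qm m *ᵥ (u - v) = (-2 : ℝ) • (Qm m *ᵥ (Aᵀ *ᵥ d)) := by
    rw [hzeq, Matrix.mulVec_add, Matrix.mulVec_smul, Qm_mulVec_smul_one, mulVec_mulVec,
      ← Matrix.mul_assoc, hQQ, ← mulVec_mulVec]
    simp
  -- projection inequality
  have hQzz : (Qm m *ᵥ (u - v)) ⬝ᵥ (Qm m *ᵥ (u - v)) ≤ (u - v) ⬝ᵥ (u - v) := by
    set z : Fin m → ℝ := u - v
    have h1 : (Qm m *ᵥ z) ⬝ᵥ (Qm m *ᵥ z) = (Qm m *ᵥ z) ⬝ᵥ z := by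
      have e := dot_mulVec_symm hQt z (Qm m *ᵥ z)
      rw [mulVec_mulVec, hQQ] at e
      rw [← e]
      exact dotProduct_comm _ _
    have h2 : (0:ℝ) ≤ (z - Qm m *ᵥ z) ⬝ᵥ (z - Qm m *ᵥ z) :=
      Finset.sum_nonneg fun i _ => mul_self_nonneg _
    have h3 : (z - Qm m *ᵥ z) ⬝ᵥ (z - Qm m *ᵥ z)
        = z ⬝ᵥ z - 2 * ((Qm m *ᵥ z) ⬝ᵥ z) + (Qm m *ᵥ z) ⬝ᵥ (Qm m *ᵥ z) := by
      simp only [sub_dotProduct, dotProduct_sub]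
      rw [dotProduct_comm z (Qm m *ᵥ z)]
      ring
    rw [h1]
    rw [h3, h1] at h2
    linarith
  -- quadratic form identity
  have hpp : d ⬝ᵥ (A * Qm m * Aᵀ) *ᵥ d
      = (Qm m *ᵥ (Aᵀ *ᵥ d)) ⬝ᵥ (Qm m *ᵥ (Aᵀ *ᵥ d)) := by
    have e1 : (A * Qm m * Aᵀ) *ᵥ d = A *ᵥ (Qm m *ᵥ (Aᵀ *ᵥ d)) := by
      rw [mulVec_mulVec, mulVec_mulVec]
    rw [e1, dotProduct_mulVec,
      show d ᵥ* A = Aᵀ *ᵥ d from by rw [← vecMul_transpose, transpose_transpose]]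
    have e2 := dot_mulVec_symm hQt (Aᵀ *ᵥ d) (Qm m *ᵥ (Aᵀ *ᵥ d))
    rw [mulVec_mulVec, hQQ] at e2
    exact e2
  have hray : lam * (d ⬝ᵥ d) ≤ d ⬝ᵥ (A * Qm m * Aᵀ) *ᵥ d := rayleigh_lower hn hpd.1 d
  -- norms
  have hdd : d ⬝ᵥ d = ‖x - y‖ ^ 2 := by
    rw [EuclideanSpace.norm_eq, Real.sq_sqrt (by positivity)]
    simp [dotProduct, hd, Real.norm_eq_abs, sq_abs, sq]
  have hww : w ⬝ᵥ w = ‖toE (xip - xim)‖ ^ 2 := by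
    rw [EuclideanSpace.norm_eq, Real.sq_sqrt (by positivity)]
    simp [dotProduct, toE, hw, Real.norm_eq_abs, sq_abs, sq]
  have hQzz4 : (Qm m *ᵥ (u - v)) ⬝ᵥ (Qm m *ᵥ (u - v))
      = 4 * ((Qm m *ᵥ (Aᵀ *ᵥ d)) ⬝ᵥ (Qm m *ᵥ (Aᵀ *ᵥ d))) := by
    rw [hQz]
    simp only [smul_dotProduct, dotProduct_smul, smul_eq_mul]
    ring
  have key : 4 * (lam * ‖x - y‖ ^ 2) ≤ ‖toE (xip - xim)‖ ^ 2 := by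
    rw [← hdd, ← hww]
    nlinarith [hray, hpp, hQzz4, hQzz, hzw]
  rw [le_div_iff₀ (by positivity)]
  have h2 : (‖x - y‖ * (2 * Real.sqrt lam)) ^ 2 ≤ ‖toE (xip - xim)‖ ^ 2 := by
    rw [mul_pow, mul_pow, Real.sq_sqrt hlampos.le]
    nlinarith [key]
  calc ‖x - y‖ * (2 * Real.sqrt lam)
      = Real.sqrt ((‖x - y‖ * (2 * Real.sqrt lam)) ^ 2) :=
        (Real.sqrt_sq (by positivity)).symm
    _ ≤ Real.sqrt (‖toE (xip - xim)‖ ^ 2) := Real.sqrt_le_sqrt h2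
    _ = ‖toE (xip - xim)‖ := Real.sqrt_sq (norm_nonneg _)
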